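/- Fix κ ∈ (0,1], 0 ≤ β, β' ≤ κ < 1, p ∈ (0,1], and suppose all scores satisfy |s_i⁺|, |s_i⁻| ≤ 1. Define B(β) = (1/(κpn))·(((κ−β)/(1−β))·Σ_{i=1}^{βpn} s_i⁺ + Σ_{i=1}^{(κ−β)pn} s_i⁻) where s⁺, s⁻ are sorted decreasingly and all index counts are integers. Then |B(β) − B(β')| ≤ (2/(κ(1−κ)))·|β − β'|. -/

import Mathlib

open Finset

lemma abs_sum_le_card' (s : Finset ℕ) (f : ℕ → ℝ) (h : ∀ i, |f i| ≤ 1) :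
    |∑ i ∈ s, f i| ≤ s.card := by
  calc |∑ i ∈ s, f i| ≤ ∑ i ∈ s, |f i| := Finset.abs_sum_le_sum_abs _ _
    _ ≤ ∑ _i ∈ s, (1:ℝ) := Finset.sum_le_sum fun i _ => h i
    _ = s.card := by simp

lemma alg_aux1 (κ L x : ℝ) (hκ0 : 0 < κ) (hκ1' : 0 < 1 - κ) (hx : x ≠ 0) :
    (1 / (κ * x)) * ((L / (1 - κ)) * (κ * x) + L * x + L * x)
      = L / (1 - κ) + 2 * L / κ := by
  field_simp
  ring

lemma alg_aux2 (κ L : ℝ) (hκ0 : 0 < κ) (hκ1' : 0 < 1 - κ) :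
    2 / (κ * (1 - κ)) * L - (L / (1 - κ) + 2 * L / κ) = L / (1 - κ) := by
  field_simp
  ring

lemma B_lip_aux (N : ℕ) (sp sm : ℕ → ℝ) (κ β β' p : ℝ) (a a' b : ℕ)
    (hκ0 : 0 < κ) (hκ1 : κ < 1) (hp0 : 0 < p)
    (hβ0 : 0 ≤ β) (hβκ : β ≤ κ) (hβ'0 : 0 ≤ β') (hβ'κ : β' ≤ κ)
    (ha : (a : ℝ) = β * p * N) (ha' : (a' : ℝ) = β' * p * N) (hb : (b : ℝ) = κ * p * N)
    (hspb : ∀ i, |sp i| ≤ 1) (hsmb : ∀ i, |sm i| ≤ 1)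
    (hle : β' ≤ β) :
    |(1 / (κ * p * N)) * (((κ - β) / (1 - β)) * ∑ i ∈ Finset.range a, sp i +
          ∑ i ∈ Finset.range (b - a), sm i) -
      (1 / (κ * p * N)) * (((κ - β') / (1 - β')) * ∑ i ∈ Finset.range a', sp i +
          ∑ i ∈ Finset.range (b - a'), sm i)| ≤
    (2 / (κ * (1 - κ))) * |β - β'| := by
  have hκ1' : (0:ℝ) < 1 - κ := by linarith
  rcases Nat.eq_zero_or_pos N with hN | hN
  · subst hN
    simp only [Nat.cast_zero, mul_zero] at ha ha' hb
    have ha0 : a = 0 := by exact_mod_cast ha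
    have ha'0 : a' = 0 := by exact_mod_cast ha'
    subst ha0; subst ha'0
    simp only [Nat.cast_zero, mul_zero, div_zero, one_div, zero_mul, sub_self, abs_zero]
    positivity
  have hNpos : (0:ℝ) < N := by exact_mod_cast hN
  have hpN : (0:ℝ) < p * N := mul_pos hp0 hNpos
  have hC0 : (0:ℝ) < κ * p * N := by positivity
  have h1β : (0:ℝ) < 1 - β := by linarith
  have h1β' : (0:ℝ) < 1 - β' := by linarith
  have hL : (0:ℝ) ≤ β - β' := by linarith
  have haa' : a' ≤ a := by
    have : (a':ℝ) ≤ a := by rw [ha, ha']; nlinarith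
    exact_mod_cast this
  have hab : a ≤ b := by
    have : (a:ℝ) ≤ b := by rw [ha, hb]; nlinarith
    exact_mod_cast this
  -- sums splits
  have hsp : ∑ i ∈ Finset.range a, sp i
      = ∑ i ∈ Finset.range a', sp i + ∑ i ∈ Finset.Ico a' a, sp i := by
    rw [Finset.range_eq_Ico, Finset.range_eq_Ico, Finset.sum_Ico_consecutive _ (Nat.zero_le _) haa']
  have hsm : ∑ i ∈ Finset.range (b - a'), sm i
      = ∑ i ∈ Finset.range (b - a), sm i + ∑ i ∈ Finset.Ico (b - a) (b - a'), sm i := by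
    rw [Finset.range_eq_Ico, Finset.range_eq_Ico,
      Finset.sum_Ico_consecutive _ (Nat.zero_le _) (Nat.sub_le_sub_left haa' b)]
  set S := ∑ i ∈ Finset.range a', sp i with hS
  set D := ∑ i ∈ Finset.Ico a' a, sp i with hD
  set T := ∑ i ∈ Finset.Ico (b - a) (b - a'), sm i with hT
  set fβ := (κ - β) / (1 - β) with hfβ
  set fβ' := (κ - β') / (1 - β') with hfβ'
  have key : (1 / (κ * p * N)) * (fβ * ∑ i ∈ Finset.range a, sp i +
          ∑ i ∈ Finset.range (b - a), sm i) -
      (1 / (κ * p * N)) * (fβ' * S + ∑ i ∈ Finset.range (b - a'), sm i)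
      = (1 / (κ * p * N)) * ((fβ - fβ') * S + fβ * D - T) := by
    rw [hsp, hsm]; ring
  rw [key]
  -- individual bounds
  have hSb : |S| ≤ (a':ℝ) := by
    have := abs_sum_le_card' (Finset.range a') sp hspb
    simpa using this
  have hcast : ((a:ℝ) - a') = (β - β') * (p * N) := by rw [ha, ha']; ring
  have hDb : |D| ≤ (β - β') * (p * N) := by
    have := abs_sum_le_card' (Finset.Ico a' a) sp hspb
    rw [Nat.card_Ico] at this
    rw [← hcast]
    calc |D| ≤ ((a - a' : ℕ) : ℝ) := this
      _ = (a:ℝ) - a' := by rw [Nat.cast_sub haa']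
  have hTb : |T| ≤ (β - β') * (p * N) := by
    have := abs_sum_le_card' (Finset.Ico (b - a) (b - a')) sm hsmb
    rw [Nat.card_Ico] at this
    have hcard : (b - a') - (b - a) = a - a' := by omega
    rw [hcard] at this
    rw [← hcast]
    calc |T| ≤ ((a - a' : ℕ) : ℝ) := this
      _ = (a:ℝ) - a' := by rw [Nat.cast_sub haa']
  have hfβ1 : |fβ| ≤ 1 := by
    rw [abs_le]
    constructor
    · have : (0:ℝ) ≤ fβ := div_nonneg (by linarith) h1β.le
      linarith
    · rw [hfβ, div_le_one h1β]; linarith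
  have hfdiff : |fβ - fβ'| ≤ (β - β') / (1 - κ) := by
    have hval : fβ - fβ' = -(((β - β') * (1 - κ)) / ((1 - β) * (1 - β'))) := by
      rw [hfβ, hfβ']
      field_simp
      ring
    rw [hval, abs_neg, abs_of_nonneg (by positivity)]
    rw [div_le_div_iff₀ (by positivity) hκ1']
    have hfac : (1 - κ) * (1 - κ) ≤ (1 - β) * (1 - β') := by nlinarith
    calc (β - β') * (1 - κ) * (1 - κ) = (β - β') * ((1 - κ) * (1 - κ)) := by ring
      _ ≤ (β - β') * ((1 - β) * (1 - β')) := mul_le_mul_of_nonneg_left hfac hL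
  have ha'C : (a':ℝ) ≤ κ * p * N := by
    rw [ha', mul_assoc, mul_assoc]
    exact mul_le_mul_of_nonneg_right hβ'κ hpN.le
  -- assemble
  have hE : |(fβ - fβ') * S + fβ * D - T|
      ≤ ((β - β') / (1 - κ)) * (κ * p * N) + (β - β') * (p * N) + (β - β') * (p * N) := by
    have h1 : |(fβ - fβ') * S| ≤ ((β - β') / (1 - κ)) * (κ * p * N) := by
      rw [abs_mul]
      exact mul_le_mul hfdiff (hSb.trans ha'C) (abs_nonneg _)
        (div_nonneg hL hκ1'.le)
    have h2 : |fβ * D| ≤ (β - β') * (p * N) := by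
      rw [abs_mul]
      calc |fβ| * |D| ≤ 1 * ((β - β') * (p * N)) :=
            mul_le_mul hfβ1 hDb (abs_nonneg _) zero_le_one
        _ = (β - β') * (p * N) := one_mul _
    calc |(fβ - fβ') * S + fβ * D - T| ≤ |(fβ - fβ') * S + fβ * D| + |T| := abs_sub _ _
      _ ≤ |(fβ - fβ') * S| + |fβ * D| + |T| := by
          have := abs_add_le ((fβ - fβ') * S) (fβ * D); linarith
      _ ≤ _ := by linarith
  rw [abs_mul, abs_of_nonneg (by positivity : (0:ℝ) ≤ 1 / (κ * p * N)),
    abs_of_nonneg hL]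
  have step : (1 / (κ * p * N)) * |(fβ - fβ') * S + fβ * D - T|
      ≤ (1 / (κ * p * N)) * (((β - β') / (1 - κ)) * (κ * p * N)
          + (β - β') * (p * N) + (β - β') * (p * N)) :=
    mul_le_mul_of_nonneg_left hE (by positivity)
  refine step.trans ?_
  rw [mul_assoc κ p (N:ℝ), alg_aux1 κ (β - β') (p * N) hκ0 hκ1' hpN.ne']
  have hdiff := alg_aux2 κ (β - β') hκ0 hκ1'
  have hpos : 0 ≤ (β - β') / (1 - κ) := div_nonneg hL hκ1'.le
  linarith

theorem B_lipschitz_in_beta (N : ℕ) (sp sm : ℕ → ℝ) (κ β β' p : ℝ) (a a' b : ℕ)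
    (hκ0 : 0 < κ) (hκ1 : κ < 1) (hp0 : 0 < p) (hp1 : p ≤ 1)
    (hβ0 : 0 ≤ β) (hβκ : β ≤ κ) (hβ'0 : 0 ≤ β') (hβ'κ : β' ≤ κ)
    (ha : (a : ℝ) = β * p * N) (ha' : (a' : ℝ) = β' * p * N) (hb : (b : ℝ) = κ * p * N)
    (hspb : ∀ i, |sp i| ≤ 1) (hsmb : ∀ i, |sm i| ≤ 1)
    (hspsort : ∀ i j : ℕ, i ≤ j → sp j ≤ sp i)
    (hsmsort : ∀ i j : ℕ, i ≤ j → sm j ≤ sm i) :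
    |(1 / (κ * p * N)) * (((κ - β) / (1 - β)) * ∑ i ∈ Finset.range a, sp i +
          ∑ i ∈ Finset.range (b - a), sm i) -
      (1 / (κ * p * N)) * (((κ - β') / (1 - β')) * ∑ i ∈ Finset.range a', sp i +
          ∑ i ∈ Finset.range (b - a'), sm i)| ≤
    (2 / (κ * (1 - κ))) * |β - β'| := by
  rcases le_total β' β with hle | hle
  · exact B_lip_aux N sp sm κ β β' p a a' b hκ0 hκ1 hp0 hβ0 hβκ hβ'0 hβ'κ ha ha' hb
      hspb hsmb hle
  · rw [abs_sub_comm, abs_sub_comm β β']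
    exact B_lip_aux N sp sm κ β' β p a' a b hκ0 hκ1 hp0 hβ'0 hβ'κ hβ0 hβκ ha' ha hb
      hspb hsmb hle
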